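/- (Claim 1) Let s : P^n → S be a locally bilateral assignment rule. Then for every agent i ∈ N, either s_i(p) ≠ ∅ for all belief profiles p ∈ P^n, or s_i(p) = ∅ for all belief profiles p ∈ P^n. -/

import Mathlib

/-- A belief (finitely additive, injective probability measure) on the
subsets of an event `Ω' ⊆ Ω`. -/
structure BeliefOn {Ω : Type*} [Fintype Ω] [DecidableEq Ω] (Ω' : Finset Ω) where
  P : Finset Ω → ℝ
  nonneg : ∀ A : Finset Ω, A ⊆ Ω' → 0 ≤ P A
  le_one : ∀ A : Finset Ω, A ⊆ Ω' → P A ≤ 1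
  total : P Ω' = 1
  additive : ∀ A B : Finset Ω, A ⊆ Ω' → B ⊆ Ω' → Disjoint A B → P (A ∪ B) = P A + P B
  inj : ∀ A B : Finset Ω, A ⊆ Ω' → B ⊆ Ω' → P A = P B → A = B

/-- A belief on the whole state space `Ω`. -/
abbrev Belief (Ω : Type*) [Fintype Ω] [DecidableEq Ω] := BeliefOn (Finset.univ : Finset Ω)
namespace BeliefOn

variable {Ω : Type*} [Fintype Ω] [DecidableEq Ω]

theorem empty_zero (b : Belief Ω) : b.P ∅ = 0 := by
  have h := b.additive ∅ ∅ (Finset.empty_subset _) (Finset.empty_subset _) (by simp)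
  simp only [Finset.union_empty] at h
  linarith

theorem mono (b : Belief Ω) {A B : Finset Ω} (hAB : A ⊆ B) : b.P A ≤ b.P B := by
  have h := b.additive A (B \ A) (Finset.subset_univ _) (Finset.subset_univ _)
    Finset.disjoint_sdiff
  rw [Finset.union_sdiff_of_subset hAB] at h
  have := b.nonneg (B \ A) (Finset.subset_univ _)
  linarith

theorem pos_of_nonempty (b : Belief Ω) {A : Finset Ω} (h : A.Nonempty) : 0 < b.P A := by
  rcases (b.nonneg A (Finset.subset_univ _)).lt_or_eq with h1 | h1
  · exact h1
  · exact absurd (b.inj A ∅ (Finset.subset_univ _) (Finset.empty_subset _)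
      (by rw [← h1, empty_zero])) h.ne_empty

/-- The conditional belief `p|Ω'` of a belief `p` on a nonempty event `Ω'`. -/
noncomputable def cond (b : Belief Ω) (Ω' : Finset Ω) (h : Ω'.Nonempty) : BeliefOn Ω' where
  P A := b.P A / b.P Ω'
  nonneg A _ := div_nonneg (b.nonneg A (Finset.subset_univ _)) (b.pos_of_nonempty h).le
  le_one A hA := (div_le_one (b.pos_of_nonempty h)).mpr (b.mono hA)
  total := div_self (b.pos_of_nonempty h).ne'
  additive A B _ _ hd := by
    try simp only
    rw [b.additive A B (Finset.subset_univ _) (Finset.subset_univ _) hd, add_div]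
  inj A B _ _ hP := b.inj A B (Finset.subset_univ _) (Finset.subset_univ _)
    (by
      have hc : b.P Ω' ≠ 0 := (b.pos_of_nonempty h).ne'
      try simp only at hP
      exact (div_left_inj' hc).mp hP)

end BeliefOn
section Rules

variable {Ω : Type*} [Fintype Ω] [DecidableEq Ω] {n : ℕ}

/-- `A` is an `n`-component partition of the event `Ω'` (components may be empty). -/
def IsPartitionOf (Ω' : Finset Ω) (A : Fin n → Finset Ω) : Prop :=
  (∀ i, A i ⊆ Ω') ∧ (∀ i j, i ≠ j → Disjoint (A i) (A j)) ∧
    Finset.univ.biUnion A = Ω'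

/-- `𝔸` is a proper covering of `Ω'`: its elements are subsets of `Ω'` whose union is `Ω'`,
no element is a strict subset of another, and their intersection is empty. -/
def ProperCovering (Ω' : Finset Ω) (𝔸 : Finset (Finset Ω)) : Prop :=
  (∀ A ∈ 𝔸, A ⊆ Ω') ∧ (∀ ω ∈ Ω', ∃ A ∈ 𝔸, ω ∈ A) ∧
    (∀ A ∈ 𝔸, ∀ B ∈ 𝔸, A ≠ B → ¬A ⊂ B) ∧ (∀ ω ∈ Ω', ∃ A ∈ 𝔸, ω ∉ A)

/-- A constant `Ω'`-assignment rule. -/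
def IsConstantRule (Ω' : Finset Ω) (s : (Fin n → BeliefOn Ω') → Fin n → Finset Ω) : Prop :=
  ∃ A : Fin n → Finset Ω, IsPartitionOf Ω' A ∧ ∀ q, s q = A

/-- An `(i,j)`-dictatorial `Ω'`-assignment rule: agent `i` receives the element of a
proper covering `𝔸` maximizing `pᵢ`, agent `j` receives its complement in `Ω'`,
all other agents receive `∅`. -/
def IsDictatorialRule (Ω' : Finset Ω) (s : (Fin n → BeliefOn Ω') → Fin n → Finset Ω)
    (i j : Fin n) : Prop :=
  i ≠ j ∧ ∃ 𝔸 : Finset (Finset Ω), ProperCovering Ω' 𝔸 ∧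
    ∀ q : Fin n → BeliefOn Ω',
      (s q i ∈ 𝔸 ∧ ∀ A ∈ 𝔸, (q i).P A ≤ (q i).P (s q i)) ∧
      s q j = Ω' \ s q i ∧ ∀ k, k ≠ i → k ≠ j → s q k = ∅

/-- An `(i,j)`-consensual `Ω'`-assignment rule with some default `A`,
`∅ ≠ A ⊊ Ω'`. -/
def IsConsensualRule (Ω' : Finset Ω) (s : (Fin n → BeliefOn Ω') → Fin n → Finset Ω)
    (i j : Fin n) : Prop :=
  i ≠ j ∧ ∃ A : Finset Ω, A ⊆ Ω' ∧ A.Nonempty ∧ A ≠ Ω' ∧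
    ∀ q : Fin n → BeliefOn Ω',
      (((q i).P A < (q i).P (Ω' \ A) ∧ (q j).P (Ω' \ A) < (q j).P A) →
        s q i = Ω' \ A ∧ s q j = A) ∧
      (¬((q i).P A < (q i).P (Ω' \ A) ∧ (q j).P (Ω' \ A) < (q j).P A) →
        s q i = A ∧ s q j = Ω' \ A) ∧
      ∀ k, k ≠ i → k ≠ j → s q k = ∅

/-- A locally bilateral assignment rule: there is a partition `{Ωᵗ}` of `Ω` into nonempty
events and, for each `t`, an `Ωᵗ`-assignment rule that is constant, bilaterally dictatorial,
or bilaterally consensual, such that `sᵢ(p) = ⋃ₜ sᵗᵢ(p|Ωᵗ)`. -/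
def IsLocallyBilateral (n : ℕ) (s : (Fin n → Belief Ω) → Fin n → Finset Ω) : Prop :=
  ∃ T : ℕ, ∃ Ωt : Fin T → Finset Ω, ∃ hne : ∀ t, (Ωt t).Nonempty,
    (∀ t t', t ≠ t' → Disjoint (Ωt t) (Ωt t')) ∧
    Finset.univ.biUnion Ωt = Finset.univ ∧
    ∃ st : (t : Fin T) → (Fin n → BeliefOn (Ωt t)) → Fin n → Finset Ω,
      (∀ t, (∀ q, IsPartitionOf (Ωt t) (st t q)) ∧
        (IsConstantRule (Ωt t) (st t) ∨ (∃ i j, IsDictatorialRule (Ωt t) (st t) i j) ∨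
          (∃ i j, IsConsensualRule (Ωt t) (st t) i j))) ∧
      ∀ p : Fin n → Belief Ω, ∀ i : Fin n,
        s p i = Finset.univ.biUnion fun t => st t (fun j => (p j).cond (Ωt t) (hne t)) i

end Rules

/-- **Claim 1.** Let `s` be a locally bilateral assignment rule on the
profiles of beliefs of `n ≥ 2` agents over a finite state space `Ω` with `|Ω| ≥ 2`.
Then for every agent `i`, either `sᵢ(p) ≠ ∅` for all belief profiles `p`, or
`sᵢ(p) = ∅` for all belief profiles `p`. -/
theorem claim1 (Ω : Type*) [Fintype Ω] [DecidableEq Ω] (hΩ : 2 ≤ Fintype.card Ω)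
    (n : ℕ) (hn : 2 ≤ n) (s : (Fin n → Belief Ω) → Fin n → Finset Ω)
    (hs : IsLocallyBilateral n s) :
    ∀ i : Fin n, (∀ p : Fin n → Belief Ω, (s p i).Nonempty) ∨
      (∀ p : Fin n → Belief Ω, s p i = ∅) := by
  obtain ⟨T, Ωt, hne, hdisj, hcover, st, hst, hs_eq⟩ := hs
  intro i
  have key : ∀ t : Fin T, (∀ q, (st t q i).Nonempty) ∨ (∀ q, st t q i = ∅) := by
    intro t
    obtain ⟨hpart, hcase⟩ := hst t
    rcases hcase with ⟨A, hA, hconst⟩ | ⟨i0, j0, hij, 𝔸, ⟨hsub, hcov, hnss, hmiss⟩, hspec⟩ |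
      ⟨i0, j0, hij, A, hAsub, hAne, hAne', hspec⟩
    · rcases (A i).eq_empty_or_nonempty with h | h
      · right; intro q; rw [hconst q, h]
      · left; intro q; rw [hconst q]; exact h
    · -- dictatorial
      by_cases hi0 : i = i0
      · subst hi0
        left; intro q
        obtain ⟨⟨hmem, _⟩, _, _⟩ := hspec q
        rcases (st t q i).eq_empty_or_nonempty with h | h
        · exfalso
          obtain ⟨ω, hω⟩ := hne t
          obtain ⟨B, hB, hωB⟩ := hcov ω hω
          exact hnss _ hmem _ hB
            (by rintro rfl; rw [h] at hωB; simp at hωB)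
            (by rw [h]; exact Finset.empty_ssubset.mpr ⟨ω, hωB⟩)
        · exact h
      · by_cases hj0 : i = j0
        · subst hj0
          left; intro q
          obtain ⟨⟨hmem, _⟩, hj, _⟩ := hspec q
          rw [hj]
          rcases (Ωt t \ st t q i0).eq_empty_or_nonempty with h | h
          · exfalso
            have hsub' : st t q i0 ⊆ Ωt t := hsub _ hmem
            have heq : st t q i0 = Ωt t := by
              refine Finset.Subset.antisymm hsub' (fun x hx => ?_)
              by_contra hc
              exact (Finset.notMem_empty x) (h ▸ Finset.mem_sdiff.mpr ⟨hx, hc⟩)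
            obtain ⟨ω, hω⟩ := hne t
            obtain ⟨B, hB, hωB⟩ := hmiss ω hω
            refine hnss B hB _ hmem ?_ ?_
            · intro hBe; rw [hBe, heq] at hωB; exact hωB hω
            · rw [heq]
              exact (Finset.ssubset_iff_of_subset (hsub _ hB)).mpr ⟨ω, hω, hωB⟩
          · exact h
        · right; intro q
          exact (hspec q).2.2 i hi0 hj0
    · -- consensual
      have hA' : (Ωt t \ A).Nonempty := by
        obtain ⟨x, hx, hnx⟩ := Finset.exists_of_ssubset (hAsub.ssubset_of_ne hAne')
        exact ⟨x, Finset.mem_sdiff.mpr ⟨hx, hnx⟩⟩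
      by_cases hi0 : i = i0
      · subst hi0; left; intro q
        obtain ⟨h1, h2, _⟩ := hspec q
        by_cases hc : ((q i).P A < (q i).P (Ωt t \ A) ∧ (q j0).P (Ωt t \ A) < (q j0).P A)
        · rw [(h1 hc).1]; exact hA'
        · rw [(h2 hc).1]; exact hAne
      · by_cases hj0 : i = j0
        · subst hj0; left; intro q
          obtain ⟨h1, h2, _⟩ := hspec q
          by_cases hc : ((q i0).P A < (q i0).P (Ωt t \ A) ∧ (q i).P (Ωt t \ A) < (q i).P A)
          · rw [(h1 hc).2]; exact hAne
          · rw [(h2 hc).2]; exact hA'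
        · right; intro q; exact (hspec q).2.2 i hi0 hj0
  by_cases hEx : ∃ t, ∀ q, (st t q i).Nonempty
  · obtain ⟨t, ht⟩ := hEx
    left; intro p
    rw [hs_eq p i]
    obtain ⟨x, hx⟩ := ht (fun j => (p j).cond (Ωt t) (hne t))
    exact ⟨x, Finset.mem_biUnion.mpr ⟨t, Finset.mem_univ t, hx⟩⟩
  · right; intro p
    rw [hs_eq p i]
    push_neg at hEx
    rw [Finset.eq_empty_iff_forall_notMem]
    intro x hx
    obtain ⟨t, _, hxt⟩ := Finset.mem_biUnion.mp hx
    have hempty := (key t).resolve_left (by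
      intro hall; obtain ⟨q, hq⟩ := hEx t; exact (hall q).ne_empty hq)
    rw [hempty _] at hxt
    exact Finset.notMem_empty x hxt
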